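/- Let H(d,α) and H(d′,α′) be two corank 1 Carnot groups, with projections {π_j}_{j=1}^{m} (m = d+2n) and {π′_ℓ}_{ℓ=1}^{m′} (m′ = d′+2n′) respectively. Suppose there are c_j > 0 (1 ≤ j ≤ m), c′_ℓ > 0 (1 ≤ ℓ ≤ m′) and D, D′ ∈ ℝ with A := ∑_{j} c_j − 1 > 0 and B := ∑_{ℓ} c′_ℓ − 1 > 0 such that for all non-negative measurable functions: ∫_{ℝ^{d+2n+1}} ∏_{j=1}^{m} f_j(π_j(z)) dz ≤ e^D ∏_{j=1}^{m} ‖f_j‖_{1/c_j} and ∫_{ℝ^{d′+2n′+1}} ∏_{ℓ=1}^{m′} g_ℓ(π′_ℓ(w)) dw ≤ e^{D′} ∏_{ℓ=1}^{m′} ‖g_ℓ‖_{1/c′_ℓ}. Then on ℝ^{d+2n+1} × ℝ^{d′+2n′+1}, with maps p̄_j(z,w) := (π_j(z), w) for 1 ≤ j ≤ m and p̄_{m+ℓ}(z,w) := (z, π′_ℓ(w)) for 1 ≤ ℓ ≤ m′, one has ∫ ∏_{j=1}^{m+m′} f_j(p̄_j(z,w)) dz dw ≤ e^{D̄} ∏_{j=1}^{m+m′}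 ‖f_j‖_{1/c̄_j} for all non-negative measurable f₁, …, f_{m+m′}, where D̄ := (B·D + A·D′)/(A+B+AB), c̄_j := c_j·B/(A+B+AB) for 1 ≤ j ≤ m, and c̄_{m+ℓ} := c′_ℓ·A/(A+B+AB) for 1 ≤ ℓ ≤ m′. -/

import Mathlib

open MeasureTheory ENNReal Filter


section helpers

lemma iSup_min_natCast' (a : ℝ≥0∞) : ⨆ n : ℕ, min a (n : ℝ≥0∞) = a := by
  simp only [← inf_iSup_eq, ENNReal.iSup_natCast, inf_top_eq]

lemma rpow_iSup_mono' {g : ℕ → ℝ≥0∞} (hg : Monotone g) {r : ℝ} (hr : 0 ≤ r) :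
    (⨆ n, g n) ^ r = ⨆ n, g n ^ r := by
  have h1 : Tendsto g atTop (nhds (⨆ n, g n)) := tendsto_atTop_iSup hg
  have h2 : Tendsto (fun n => g n ^ r) atTop (nhds ((⨆ n, g n) ^ r)) :=
    (ENNReal.continuous_rpow_const.tendsto _).comp h1
  have h3 : Tendsto (fun n => g n ^ r) atTop (nhds (⨆ n, g n ^ r)) :=
    tendsto_atTop_iSup (fun i j hij => ENNReal.rpow_le_rpow (hg hij) hr)
  exact tendsto_nhds_unique h2 h3

/-- **Minkowski's integral inequality** for `ℝ≥0∞`-valued functions. -/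
lemma minkowski_lintegral {X Y : Type*} [MeasurableSpace X] [MeasurableSpace Y]
    (μ : Measure X) (ν : Measure Y) [SFinite μ] [SigmaFinite ν]
    {f : X → Y → ℝ≥0∞} (hf : Measurable (Function.uncurry f)) {r : ℝ} (hr : 1 ≤ r) :
    (∫⁻ y, (∫⁻ x, f x y ∂μ) ^ r ∂ν) ^ (1/r) ≤ ∫⁻ x, (∫⁻ y, (f x y) ^ r ∂ν) ^ (1/r) ∂μ := by
  rcases eq_or_lt_of_le hr with hr1 | hr1
  · simp only [← hr1, ENNReal.rpow_one, one_div, inv_one]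
    exact le_of_eq (lintegral_lintegral_swap hf.aemeasurable).symm
  have hr0 : (0:ℝ) < r := lt_trans one_pos hr1
  set S : Y → ℝ≥0∞ := fun y => ∫⁻ x, f x y ∂μ with hS_def
  have hS : Measurable S := hf.lintegral_prod_left
  set R : ℝ≥0∞ := ∫⁻ x, (∫⁻ y, (f x y) ^ r ∂ν) ^ (1/r) ∂μ with hR_def
  set T : ℕ → Y → ℝ≥0∞ :=
    fun n => (spanningSets ν n).indicator (fun y => min (S y) n) with hT_def
  have hTmeas : ∀ n, Measurable (T n) := fun n =>
    (hS.min measurable_const).indicator (measurableSet_spanningSets ν n)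
  have hTmono : Monotone T := by
    intro i j hij y
    simp only [hT_def, Set.indicator]
    by_cases hy : y ∈ spanningSets ν i
    · have hy' : y ∈ spanningSets ν j := monotone_spanningSets ν hij hy
      simp only [hy, hy', if_true]
      exact min_le_min le_rfl (Nat.cast_le.mpr hij)
    · simp [hy]
  have hTle : ∀ n y, T n y ≤ S y := by
    intro n y
    simp only [hT_def, Set.indicator]
    split
    · exact min_le_left _ _
    · exact zero_le
  have hTsup : ∀ y, (⨆ n, T n y) = S y := by
    intro y
    apply le_antisymm (iSup_le fun n => hTle n y)
    conv_lhs => rw [← iSup_min_natCast' (S y)]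
    refine iSup_le fun m => ?_
    obtain ⟨N, hN⟩ : ∃ N, y ∈ spanningSets ν N := by
      have h1 := MeasureTheory.iUnion_spanningSets ν
      have h2 : y ∈ ⋃ n, spanningSets ν n := by rw [h1]; trivial
      exact Set.mem_iUnion.mp h2
    refine le_trans ?_ (le_iSup _ (max N m))
    have hy : y ∈ spanningSets ν (max N m) := monotone_spanningSets ν (le_max_left _ _) hN
    simp only [hT_def, Set.indicator, hy, if_true]
    exact min_le_min le_rfl (Nat.cast_le.mpr (le_max_right _ _))
  set A : ℕ → ℝ≥0∞ := fun n => ∫⁻ y, T n y ^ r ∂ν with hA_def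
  have hAfin : ∀ n, A n ≠ ⊤ := by
    intro n
    have hb : ∀ y, T n y ^ r ≤ (spanningSets ν n).indicator (fun _ => (n : ℝ≥0∞) ^ r) y := by
      intro y
      simp only [hT_def, Set.indicator]
      split
      · exact ENNReal.rpow_le_rpow (min_le_right _ _) (le_of_lt hr0)
      · simp [ENNReal.zero_rpow_of_pos hr0]
    refine ne_top_of_le_ne_top ?_ (lintegral_mono hb)
    rw [lintegral_indicator (measurableSet_spanningSets ν n)]
    simp only [MeasureTheory.setLIntegral_const]
    exact ENNReal.mul_ne_top
      (ENNReal.rpow_lt_top_of_nonneg (le_of_lt hr0) (by simp)).ne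
      (measure_spanningSets_lt_top ν n).ne
  have hq : Real.HolderConjugate r (r.conjExponent) := Real.HolderConjugate.conjExponent hr1
  set q : ℝ := r.conjExponent with hq_def
  have hq0 : (0:ℝ) < q := hq.symm.pos
  have hkey : ∀ n, A n ≤ R * A n ^ (1/q) := by
    intro n
    have step1 : A n ≤ ∫⁻ y, S y * T n y ^ (r - 1) ∂ν := by
      refine lintegral_mono fun y => ?_
      have h : T n y ^ r = T n y ^ (1 : ℝ) * T n y ^ (r - 1) := by
        rw [← ENNReal.rpow_add_of_nonneg _ _ zero_le_one (by linarith)]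
        ring_nf
      rw [h, ENNReal.rpow_one]
      exact mul_le_mul_left (hTle n y) _
    have step2 : ∫⁻ y, S y * T n y ^ (r - 1) ∂ν
        = ∫⁻ x, ∫⁻ y, f x y * T n y ^ (r - 1) ∂ν ∂μ := by
      rw [lintegral_lintegral_swap]
      · refine lintegral_congr fun y => ?_
        have hfy : Measurable fun x => f x y := hf.of_uncurry_right
        rw [← lintegral_mul_const'' _ hfy.aemeasurable]
      · exact (hf.mul (((hTmeas n).pow_const _).comp measurable_snd)).aemeasurable
    have step3 : ∀ x, ∫⁻ y, f x y * T n y ^ (r - 1) ∂ν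
        ≤ (∫⁻ y, f x y ^ r ∂ν) ^ (1/r) * A n ^ (1/q) := by
      intro x
      have hfx : Measurable (f x) := hf.of_uncurry_left
      have h := ENNReal.lintegral_mul_le_Lp_mul_Lq ν hq
        (hfx.aemeasurable) (((hTmeas n).pow_const (r-1)).aemeasurable)
      refine le_trans h ?_
      apply mul_le_mul_right
      apply ENNReal.rpow_le_rpow _ (le_of_lt (by positivity))
      refine le_of_eq (lintegral_congr fun y => ?_)
      rw [← ENNReal.rpow_mul]
      congr 1
      have hrne : r - 1 ≠ 0 := by linarith
      rw [hq_def, Real.conjExponent]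
      field_simp
    calc A n ≤ ∫⁻ x, (∫⁻ y, f x y ^ r ∂ν) ^ (1/r) * A n ^ (1/q) ∂μ :=
          le_trans step1 (step2 ▸ lintegral_mono step3)
      _ = R * A n ^ (1/q) := by
          have hmeas : Measurable fun x => (∫⁻ y, f x y ^ r ∂ν) ^ (1/r) :=
            ((hf.pow_const r).lintegral_prod_right').pow_const (1/r)
          rw [lintegral_mul_const'' _ hmeas.aemeasurable]
  have hAle : ∀ n, A n ≤ R ^ r := by
    intro n
    by_cases hA0 : A n = 0
    · simp [hA0]
    have hsum : 1/r + 1/q = 1 := by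
      have h := hq.inv_add_inv_eq_one
      simpa [one_div] using h
    have h1 : A n ^ (1/r) * A n ^ (1/q) ≤ R * A n ^ (1/q) := by
      rw [← ENNReal.rpow_add_of_nonneg _ _ (by positivity) (by positivity), hsum]
      simpa [ENNReal.rpow_one] using hkey n
    have h2 : A n ^ (1/r) ≤ R := by
      refine (ENNReal.mul_le_mul_iff_left ?_ ?_).mp h1
      · simp [ENNReal.rpow_eq_zero_iff, hA0, hAfin n, (by positivity : (0:ℝ) < 1/q)]
      · exact (ENNReal.rpow_lt_top_of_nonneg (by positivity) (hAfin n)).ne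
    calc A n = (A n ^ (1/r)) ^ r := by
          rw [← ENNReal.rpow_mul, one_div, inv_mul_cancel₀ (ne_of_gt hr0), ENNReal.rpow_one]
      _ ≤ R ^ r := ENNReal.rpow_le_rpow h2 (le_of_lt hr0)
  have hconv : ∫⁻ y, S y ^ r ∂ν = ⨆ n, A n := by
    have h : ∀ y, S y ^ r = ⨆ n, T n y ^ r := by
      intro y
      rw [← hTsup y]
      exact rpow_iSup_mono' (fun i j hij => hTmono hij y) (le_of_lt hr0)
    simp_rw [h]
    exact lintegral_iSup (fun n => (hTmeas n).pow_const r)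
      (fun i j hij y => ENNReal.rpow_le_rpow (hTmono hij y) (le_of_lt hr0))
  have hfin : ∫⁻ y, S y ^ r ∂ν ≤ R ^ r := by
    rw [hconv]; exact iSup_le hAle
  calc (∫⁻ y, S y ^ r ∂ν) ^ (1/r) ≤ (R ^ r) ^ (1/r) :=
        ENNReal.rpow_le_rpow hfin (by positivity)
    _ = R := by
        rw [← ENNReal.rpow_mul, mul_one_div, div_self (ne_of_gt hr0), ENNReal.rpow_one]

lemma measurable_rpow_const_real {c : ℝ} : Measurable fun x : ℝ => x ^ c := by fun_prop

/-- `eLpNorm` of a nonnegative function with exponent `1/e` as a lintegral. -/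
lemma eLpNorm_ofReal_eq {β : Type*} [MeasurableSpace β] (μ : Measure β) (F : β → ℝ)
    (h0 : ∀ y, 0 ≤ F y) {e : ℝ} (he : 0 < e) :
    eLpNorm F (ENNReal.ofReal (1/e)) μ = (∫⁻ y, ENNReal.ofReal (F y) ^ (1/e) ∂μ) ^ e := by
  rw [eLpNorm_eq_lintegral_rpow_enorm_toReal
      (ENNReal.ofReal_pos.mpr (by positivity)).ne' ENNReal.ofReal_ne_top]
  rw [ENNReal.toReal_ofReal (by positivity)]
  congr 1
  · exact lintegral_congr fun y => by rw [Real.enorm_eq_ofReal (h0 y)]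
  · rw [one_div_one_div]

end helpers


/-- Delete the `j`-th coordinate of `x : ℝ^k` and append `s` as the last coordinate,
identifying `ℝ^{k-1} × ℝ` with `ℝ^k`. -/
noncomputable def deleteInsert {k : ℕ} (j : Fin k) (x : Fin k → ℝ) (s : ℝ) : Fin k → ℝ :=
  fun i => if _ : (i : ℕ) + 1 = k then s
    else if _ : (i : ℕ) < (j : ℕ) then x i
    else x ⟨(i : ℕ) + 1, by have := i.isLt; omega⟩

/-- The quadratic correction term in the `j`-th projection on the corank 1 Carnot group. -/
noncomputable def tshift (d n : ℕ) (α : Fin n → ℝ) (j : Fin (d + 2*n))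
    (x : Fin (d + 2*n) → ℝ) : ℝ :=
  if _ : (j : ℕ) < d then 0
  else (if ((j : ℕ) - d) % 2 = 0 then (1:ℝ) else -1) *
      (α ⟨((j : ℕ) - d) / 2, by have := j.isLt; omega⟩ / 2) *
      x ⟨d + 2 * (((j : ℕ) - d) / 2), by have := j.isLt; omega⟩ *
      x ⟨d + 2 * (((j : ℕ) - d) / 2) + 1, by have := j.isLt; omega⟩

/-- The `j`-th projection `π_j : H(d,α) → ℝ^{d+2n}` (for `1 ≤ j ≤ d+2n` in 1-based
numbering), where the target `ℝ^{d+2n-1} × ℝ` is identified with `ℝ^{d+2n}` by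
placing `x̂_j` in the first `d+2n-1` slots and the (shifted) `t`-variable in the
last slot. -/
noncomputable def carnotProj (d n : ℕ) (α : Fin n → ℝ) (j : Fin (d + 2*n))
    (p : (Fin (d + 2*n) → ℝ) × ℝ) : Fin (d + 2*n) → ℝ :=
  deleteInsert j p.1 (p.2 + tshift d n α j p.1)


lemma measurable_tshift (d n : ℕ) (α : Fin n → ℝ) (j : Fin (d + 2*n)) :
    Measurable (tshift d n α j) := by
  unfold tshift
  split
  · exact measurable_const
  · exact (measurable_const.mul (measurable_pi_apply _)).mul (measurable_pi_apply _)

lemma measurable_carnotProj (d n : ℕ) (α : Fin n → ℝ) (j : Fin (d + 2*n)) :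
    Measurable (carnotProj d n α j) := by
  unfold carnotProj deleteInsert
  apply measurable_pi_lambda
  intro i
  split
  · exact measurable_snd.add ((measurable_tshift d n α j).comp measurable_fst)
  · split
    · exact (measurable_pi_apply _).comp measurable_fst
    · exact (measurable_pi_apply _).comp measurable_fst

set_option maxHeartbeats 2000000 in
/-- **Proposition 3.1 of the paper**: if Brascamp–Lieb type inequalities with
data `(c_j, D)` and `(c'_ℓ, D')` hold on the corank 1 Carnot groups `H(d,α)` and
`H(d',α')` respectively (with `A = ∑ c_j - 1 > 0`, `B = ∑ c'_ℓ - 1 > 0`), then on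
the product group the inequality with constant `e^{D̄}`,
`D̄ = (B·D + A·D')/(A+B+AB)`, and exponents `1/c̄_j`, `c̄_j = c_j B/(A+B+AB)`,
`c̄_{m+ℓ} = c'_ℓ A/(A+B+AB)`, holds for the maps `p̄_j(z,w) = (π_j z, w)` and
`p̄_{m+ℓ}(z,w) = (z, π'_ℓ w)`. -/
theorem product_brascamp_lieb (d n : ℕ) (hn : 1 ≤ n)
    (α : Fin n → ℝ) (hα : ∀ i, 0 < α i) (hmono : Monotone α)
    (d' n' : ℕ) (hn' : 1 ≤ n')
    (α' : Fin n' → ℝ) (hα' : ∀ i, 0 < α' i) (hmono' : Monotone α')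
    (D D' : ℝ) (c : Fin (d + 2*n) → ℝ) (c' : Fin (d' + 2*n') → ℝ)
    (hc : ∀ j, 0 < c j) (hc' : ∀ ℓ, 0 < c' ℓ)
    (hA : 0 < ∑ j, c j - 1) (hB : 0 < ∑ ℓ, c' ℓ - 1)
    (hBL : ∀ F : Fin (d + 2*n) → (Fin (d + 2*n) → ℝ) → ℝ,
      (∀ j, Measurable (F j)) → (∀ j y, 0 ≤ F j y) →
      ∫⁻ z : (Fin (d + 2*n) → ℝ) × ℝ,
          ∏ j, ENNReal.ofReal (F j (carnotProj d n α j z)) ≤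
        ENNReal.ofReal (Real.exp D) *
          ∏ j, eLpNorm (F j) (ENNReal.ofReal (1 / c j)) volume)
    (hBL' : ∀ G : Fin (d' + 2*n') → (Fin (d' + 2*n') → ℝ) → ℝ,
      (∀ ℓ, Measurable (G ℓ)) → (∀ ℓ y, 0 ≤ G ℓ y) →
      ∫⁻ w : (Fin (d' + 2*n') → ℝ) × ℝ,
          ∏ ℓ, ENNReal.ofReal (G ℓ (carnotProj d' n' α' ℓ w)) ≤
        ENNReal.ofReal (Real.exp D') *
          ∏ ℓ, eLpNorm (G ℓ) (ENNReal.ofReal (1 / c' ℓ)) volume)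
    (f : Fin (d + 2*n) →
      ((Fin (d + 2*n) → ℝ) × ((Fin (d' + 2*n') → ℝ) × ℝ)) → ℝ)
    (g : Fin (d' + 2*n') →
      (((Fin (d + 2*n) → ℝ) × ℝ) × (Fin (d' + 2*n') → ℝ)) → ℝ)
    (hf : ∀ j, Measurable (f j)) (hf0 : ∀ j u, 0 ≤ f j u)
    (hg : ∀ ℓ, Measurable (g ℓ)) (hg0 : ∀ ℓ u, 0 ≤ g ℓ u) :
    ∫⁻ q : ((Fin (d + 2*n) → ℝ) × ℝ) × ((Fin (d' + 2*n') → ℝ) × ℝ),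
        (∏ j, ENNReal.ofReal (f j (carnotProj d n α j q.1, q.2))) *
          ∏ ℓ, ENNReal.ofReal (g ℓ (q.1, carnotProj d' n' α' ℓ q.2)) ≤
      ENNReal.ofReal (Real.exp
          (((∑ ℓ, c' ℓ - 1) * D + (∑ j, c j - 1) * D') /
            ((∑ j, c j - 1) + (∑ ℓ, c' ℓ - 1) + (∑ j, c j - 1) * (∑ ℓ, c' ℓ - 1)))) *
        ((∏ j, eLpNorm (f j)
            (ENNReal.ofReal (1 / (c j * (∑ ℓ, c' ℓ - 1) /
              ((∑ j, c j - 1) + (∑ ℓ, c' ℓ - 1) +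
                (∑ j, c j - 1) * (∑ ℓ, c' ℓ - 1))))) volume) *
          ∏ ℓ, eLpNorm (g ℓ)
            (ENNReal.ofReal (1 / (c' ℓ * (∑ j, c j - 1) /
              ((∑ j, c j - 1) + (∑ ℓ, c' ℓ - 1) +
                (∑ j, c j - 1) * (∑ ℓ, c' ℓ - 1))))) volume) := by
    classical
  set A : ℝ := ∑ j, c j - 1 with hA_def
  set B : ℝ := ∑ ℓ, c' ℓ - 1 with hB_def
  set K : ℝ := A + B + A * B with hK_def
  have hK : 0 < K := by rw [hK_def]; have := mul_pos hA hB; linarith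
  set θ : ℝ := B / K with hθ_def
  set θ' : ℝ := A / K with hθ'_def
  have hθpos : 0 < θ := div_pos hB hK
  have hθ'pos : 0 < θ' := div_pos hA hK
  have hθ1 : θ < 1 := by
    rw [hθ_def, div_lt_one hK, hK_def]
    nlinarith [mul_pos hA hB]
  have h1θ : 0 < 1 - θ := by linarith
  set r : ℝ := 1 + B with hr_def
  have hr1 : 1 ≤ r := by rw [hr_def]; linarith
  have hr0 : (0:ℝ) < r := by linarith
  have hrθ' : r * θ' = 1 - θ := by
    rw [hr_def, hθ'_def, hθ_def]
    field_simp
    rw [hK_def]; ring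
  have hsumc : ∑ j, c j = A + 1 := by rw [hA_def]; ring
  have hsumc' : ∑ ℓ, c' ℓ = B + 1 := by rw [hB_def]; ring
  have hsum1 : θ' + ∑ j, θ * c j = 1 := by
    rw [← Finset.mul_sum, hsumc, hθ_def, hθ'_def]
    field_simp
    rw [hK_def]; ring
  have hsum2 : ∑ ℓ, c' ℓ * (1/r) = 1 := by
    rw [← Finset.sum_mul, hsumc', mul_one_div, show B + 1 = r by rw [hr_def]; ring,
      div_self hr0.ne']
  -- rewrite the goal exponents
  have e1 : ∀ j, c j * B / K = θ * c j := fun j => by rw [hθ_def]; ring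
  have e2 : ∀ ℓ, c' ℓ * A / K = θ' * c' ℓ := fun ℓ => by rw [hθ'_def]; ring
  have e3 : (B * D + A * D') / K = D * θ + D' * θ' := by
    rw [hθ_def, hθ'_def]; field_simp
  simp only [e1, e2, e3]
  -- measurability of the projections
  have hproj : ∀ j, Measurable (carnotProj d n α j) := measurable_carnotProj d n α
  have hproj' : ∀ ℓ, Measurable (carnotProj d' n' α' ℓ) := measurable_carnotProj d' n' α'
  -- main auxiliary quantities
  set H : Fin (d + 2*n) → ((Fin (d' + 2*n') → ℝ) × ℝ) → ℝ≥0∞ :=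
    fun j w => ∫⁻ y, ENNReal.ofReal (f j (y, w)) ^ (1/(θ * c j)) with hH_def
  set U : ((Fin (d + 2*n) → ℝ) × ℝ) → ((Fin (d' + 2*n') → ℝ) × ℝ) → ℝ≥0∞ :=
    fun z w => ∏ ℓ, ENNReal.ofReal (g ℓ (z, carnotProj d' n' α' ℓ w)) ^ (1/(1-θ)) with hU_def
  set V : Fin (d' + 2*n') → ((Fin (d + 2*n) → ℝ) × ℝ) → ℝ≥0∞ :=
    fun ℓ z => ∫⁻ y', ENNReal.ofReal (g ℓ (z, y')) ^ (1/(θ' * c' ℓ)) with hV_def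
  set M : ((Fin (d' + 2*n') → ℝ) × ℝ) → ℝ≥0∞ := fun w => (∫⁻ z, U z w) ^ r with hM_def
  have hUunc : Measurable (Function.uncurry U) := by
    apply Finset.measurable_prod
    intro ℓ _
    exact (((hg ℓ).comp
      (measurable_fst.prodMk ((hproj' ℓ).comp measurable_snd))).ennreal_ofReal).pow_const _
  have hHmeas : ∀ j, Measurable (H j) := by
    intro j
    apply Measurable.lintegral_prod_left (f := fun y w => ENNReal.ofReal (f j (y, w)) ^ (1/(θ * c j)))
    exact ((hf j).ennreal_ofReal).pow_const _
  have hMmeas : Measurable M := (hUunc.lintegral_prod_left).pow_const r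
  have hVmeas : ∀ ℓ, Measurable (V ℓ) := by
    intro ℓ
    apply Measurable.lintegral_prod_right' (f := fun p => ENNReal.ofReal (g ℓ p) ^ (1/(θ' * c' ℓ)))
    exact ((hg ℓ).ennreal_ofReal).pow_const _
  have hPmeas : Measurable (fun q : ((Fin (d + 2*n) → ℝ) × ℝ) × ((Fin (d' + 2*n') → ℝ) × ℝ) =>
      (∏ j, ENNReal.ofReal (f j (carnotProj d n α j q.1, q.2))) *
        ∏ ℓ, ENNReal.ofReal (g ℓ (q.1, carnotProj d' n' α' ℓ q.2))) := by
    apply Measurable.mul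
    · exact Finset.measurable_prod _ fun j _ =>
        ((hf j).comp (((hproj j).comp measurable_fst).prodMk measurable_snd)).ennreal_ofReal
    · exact Finset.measurable_prod _ fun ℓ _ =>
        ((hg ℓ).comp (measurable_fst.prodMk ((hproj' ℓ).comp measurable_snd))).ennreal_ofReal
  -- Step B : for each fixed w, Hölder in z followed by the first BL inequality
  have stepB : ∀ w : (Fin (d' + 2*n') → ℝ) × ℝ,
      (∫⁻ z, (∏ j, ENNReal.ofReal (f j (carnotProj d n α j z, w))) *
        ∏ ℓ, ENNReal.ofReal (g ℓ (z, carnotProj d' n' α' ℓ w))) ≤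
      ENNReal.ofReal (Real.exp D) ^ θ * ((M w) ^ θ' * ∏ j, (H j w) ^ (θ * c j)) := by
    intro w
    have hXmeas : Measurable fun z : (Fin (d + 2*n) → ℝ) × ℝ =>
        ∏ j, ENNReal.ofReal (f j (carnotProj d n α j z, w)) ^ (1/θ) :=
      Finset.measurable_prod _ fun j _ =>
        (((hf j).comp ((hproj j).prodMk measurable_const)).ennreal_ofReal).pow_const _
    have hUwmeas : Measurable fun z => U z w :=
      Finset.measurable_prod _ fun ℓ _ =>
        (((hg ℓ).comp (measurable_id.prodMk measurable_const)).ennreal_ofReal).pow_const _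
    have hHolder := ENNReal.lintegral_mul_norm_pow_le (μ := volume)
      hXmeas.aemeasurable hUwmeas.aemeasurable hθpos.le h1θ.le (by ring)
    have hLHSeq : (∫⁻ z, (∏ j, ENNReal.ofReal (f j (carnotProj d n α j z, w)) ^ (1/θ)) ^ θ *
          (U z w) ^ (1-θ)) =
        ∫⁻ z, (∏ j, ENNReal.ofReal (f j (carnotProj d n α j z, w))) *
          ∏ ℓ, ENNReal.ofReal (g ℓ (z, carnotProj d' n' α' ℓ w)) := by
      refine lintegral_congr fun z => ?_
      congr 1
      · rw [ENNReal.prod_rpow_of_nonneg (by positivity), ← ENNReal.rpow_mul, one_div,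
          inv_mul_cancel₀ hθpos.ne', ENNReal.rpow_one]
      · simp only [hU_def]
        rw [ENNReal.prod_rpow_of_nonneg (by positivity), ← ENNReal.rpow_mul, one_div,
          inv_mul_cancel₀ h1θ.ne', ENNReal.rpow_one]
    have hBLw := hBL (fun j y => f j (y, w) ^ (1/θ))
      (fun j => measurable_rpow_const_real.comp ((hf j).comp (measurable_id.prodMk measurable_const)))
      (fun j y => Real.rpow_nonneg (hf0 j _) _)
    have hBLw' : (∫⁻ z, ∏ j, ENNReal.ofReal (f j (carnotProj d n α j z, w)) ^ (1/θ)) ≤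
        ENNReal.ofReal (Real.exp D) * ∏ j, (H j w) ^ (c j) := by
      refine le_trans (le_of_eq ?_) (le_trans hBLw (le_of_eq ?_))
      · exact lintegral_congr fun z => Finset.prod_congr rfl fun j _ =>
          ENNReal.ofReal_rpow_of_nonneg (hf0 j _) (by positivity)
      · congr 1
        refine Finset.prod_congr rfl fun j _ => ?_
        rw [eLpNorm_ofReal_eq _ _ (fun y => Real.rpow_nonneg (hf0 j _) _) (hc j)]
        simp only [hH_def]
        congr 1
        refine lintegral_congr fun y => ?_
        rw [← ENNReal.ofReal_rpow_of_nonneg (hf0 j _) (by positivity), ← ENNReal.rpow_mul,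
          div_mul_div_comm, one_mul]
    calc (∫⁻ z, (∏ j, ENNReal.ofReal (f j (carnotProj d n α j z, w))) *
          ∏ ℓ, ENNReal.ofReal (g ℓ (z, carnotProj d' n' α' ℓ w)))
        ≤ (∫⁻ z, ∏ j, ENNReal.ofReal (f j (carnotProj d n α j z, w)) ^ (1/θ)) ^ θ *
            (∫⁻ z, U z w) ^ (1-θ) := hLHSeq ▸ hHolder
      _ ≤ (ENNReal.ofReal (Real.exp D) * ∏ j, (H j w) ^ (c j)) ^ θ * (∫⁻ z, U z w) ^ (1-θ) := by
          gcongr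
      _ = ENNReal.ofReal (Real.exp D) ^ θ * ((M w) ^ θ' * ∏ j, (H j w) ^ (θ * c j)) := by
          rw [ENNReal.mul_rpow_of_nonneg _ _ hθpos.le, ← ENNReal.prod_rpow_of_nonneg hθpos.le]
          have h1 : ∀ j : Fin (d + 2*n), ((H j w) ^ (c j)) ^ θ = (H j w) ^ (θ * c j) := by
            intro j; rw [← ENNReal.rpow_mul, mul_comm]
          have h2 : (M w) ^ θ' = (∫⁻ z, U z w) ^ (1 - θ) := by
            simp only [hM_def]
            rw [← ENNReal.rpow_mul, hrθ']
          rw [Finset.prod_congr rfl fun j _ => h1 j, h2]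
          ring
  -- Step C : Hölder in w
  have hMHmeas : Measurable fun w => (M w) ^ θ' * ∏ j, (H j w) ^ (θ * c j) :=
    (hMmeas.pow_const _).mul (Finset.measurable_prod _ fun j _ => (hHmeas j).pow_const _)
  have stepC : (∫⁻ w, (M w) ^ θ' * ∏ j, (H j w) ^ (θ * c j)) ≤
      (∫⁻ w, M w) ^ θ' * ∏ j, (∫⁻ w, H j w) ^ (θ * c j) :=
    ENNReal.lintegral_mul_prod_norm_pow_le _ hMmeas.aemeasurable
      (fun j _ => (hHmeas j).aemeasurable) _ hsum1 hθ'pos.le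
      (fun j _ => (mul_pos hθpos (hc j)).le)
  -- Step D : the f-norms
  have stepD : ∀ j, (∫⁻ w, H j w) ^ (θ * c j) =
      eLpNorm (f j) (ENNReal.ofReal (1/(θ * c j))) volume := by
    intro j
    rw [eLpNorm_ofReal_eq _ _ (hf0 j) (mul_pos hθpos (hc j))]
    congr 1
    have h : (∫⁻ u : (Fin (d + 2*n) → ℝ) × ((Fin (d' + 2*n') → ℝ) × ℝ),
        ENNReal.ofReal (f j u) ^ (1/(θ * c j))) =
        ∫⁻ w, ∫⁻ y, ENNReal.ofReal (f j (y, w)) ^ (1/(θ * c j)) := by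
      rw [Measure.volume_eq_prod]
      exact lintegral_prod_symm _ (((hf j).ennreal_ofReal).pow_const _).aemeasurable
    rw [← h]
  -- Step E : Minkowski + second BL inequality + Hölder in z
  have stepE : (∫⁻ w, M w) ≤
      ENNReal.ofReal (Real.exp D') * ∏ ℓ, (∫⁻ z, V ℓ z) ^ (c' ℓ) := by
    have hinner : ∀ z : (Fin (d + 2*n) → ℝ) × ℝ,
        (∫⁻ w, U z w ^ r) ≤ ENNReal.ofReal (Real.exp D') * ∏ ℓ, (V ℓ z) ^ (c' ℓ) := by
      intro z
      have hBLz := hBL' (fun ℓ y' => g ℓ (z, y') ^ (r/(1-θ)))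
        (fun ℓ => measurable_rpow_const_real.comp
          ((hg ℓ).comp (measurable_const.prodMk measurable_id)))
        (fun ℓ y' => Real.rpow_nonneg (hg0 ℓ _) _)
      refine le_trans (le_of_eq ?_) (le_trans hBLz (le_of_eq ?_))
      · refine lintegral_congr fun w => ?_
        simp only [hU_def]
        rw [← ENNReal.prod_rpow_of_nonneg hr0.le]
        refine Finset.prod_congr rfl fun ℓ _ => ?_
        rw [← ENNReal.rpow_mul, div_mul_eq_mul_div, one_mul,
          ENNReal.ofReal_rpow_of_nonneg (hg0 ℓ _) (by positivity)]
      · congr 1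
        refine Finset.prod_congr rfl fun ℓ _ => ?_
        rw [eLpNorm_ofReal_eq _ _ (fun y' => Real.rpow_nonneg (hg0 ℓ _) _) (hc' ℓ)]
        simp only [hV_def]
        congr 1
        refine lintegral_congr fun y' => ?_
        rw [← ENNReal.ofReal_rpow_of_nonneg (hg0 ℓ _) (by positivity), ← ENNReal.rpow_mul]
        congr 1
        rw [← hrθ', div_mul_div_comm, mul_one, mul_assoc,
          div_mul_cancel_left₀ hr0.ne', one_div]
    have hmink := minkowski_lintegral volume volume hUunc hr1
    have hstep : (∫⁻ z, (∫⁻ w, U z w ^ r) ^ (1/r)) ≤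
        (ENNReal.ofReal (Real.exp D')) ^ (1/r) * ∏ ℓ, (∫⁻ z, V ℓ z) ^ (c' ℓ * (1/r)) := by
      calc (∫⁻ z, (∫⁻ w, U z w ^ r) ^ (1/r))
          ≤ ∫⁻ z, (ENNReal.ofReal (Real.exp D')) ^ (1/r) *
              ∏ ℓ, (V ℓ z) ^ (c' ℓ * (1/r)) := by
            refine lintegral_mono fun z => ?_
            refine le_trans (ENNReal.rpow_le_rpow (hinner z) (by positivity)) (le_of_eq ?_)
            rw [ENNReal.mul_rpow_of_nonneg _ _ (by positivity),
              ← ENNReal.prod_rpow_of_nonneg (by positivity)]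
            congr 1
            exact Finset.prod_congr rfl fun ℓ _ => by rw [← ENNReal.rpow_mul]
        _ = (ENNReal.ofReal (Real.exp D')) ^ (1/r) *
              ∫⁻ z, ∏ ℓ, (V ℓ z) ^ (c' ℓ * (1/r)) :=
            lintegral_const_mul'' _
              (Finset.measurable_prod _ fun ℓ _ => (hVmeas ℓ).pow_const _).aemeasurable
        _ ≤ (ENNReal.ofReal (Real.exp D')) ^ (1/r) *
              ∏ ℓ, (∫⁻ z, V ℓ z) ^ (c' ℓ * (1/r)) := by
            gcongr
            exact ENNReal.lintegral_prod_norm_pow_le _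
              (fun ℓ _ => (hVmeas ℓ).aemeasurable) hsum2
              (fun ℓ _ => (mul_pos (hc' ℓ) (by positivity : (0:ℝ) < 1/r)).le)
    calc (∫⁻ w, M w) = ((∫⁻ w, M w) ^ (1/r)) ^ r := by
          rw [← ENNReal.rpow_mul, one_div, inv_mul_cancel₀ hr0.ne', ENNReal.rpow_one]
      _ ≤ (∫⁻ z, (∫⁻ w, U z w ^ r) ^ (1/r)) ^ r := by
          refine ENNReal.rpow_le_rpow ?_ hr0.le
          simpa only [hM_def] using hmink
      _ ≤ ((ENNReal.ofReal (Real.exp D')) ^ (1/r) *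
            ∏ ℓ, (∫⁻ z, V ℓ z) ^ (c' ℓ * (1/r))) ^ r := ENNReal.rpow_le_rpow hstep hr0.le
      _ = ENNReal.ofReal (Real.exp D') * ∏ ℓ, (∫⁻ z, V ℓ z) ^ (c' ℓ) := by
          rw [ENNReal.mul_rpow_of_nonneg _ _ hr0.le, ← ENNReal.rpow_mul, one_div,
            inv_mul_cancel₀ hr0.ne', ENNReal.rpow_one,
            ← ENNReal.prod_rpow_of_nonneg hr0.le]
          congr 1
          refine Finset.prod_congr rfl fun ℓ _ => ?_
          rw [← ENNReal.rpow_mul]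
          congr 1
          field_simp
  -- Step F : the g-norms
  have stepF : ∀ ℓ, (∫⁻ z, V ℓ z) ^ (θ' * c' ℓ) =
      eLpNorm (g ℓ) (ENNReal.ofReal (1/(θ' * c' ℓ))) volume := by
    intro ℓ
    rw [eLpNorm_ofReal_eq _ _ (hg0 ℓ) (mul_pos hθ'pos (hc' ℓ))]
    congr 1
    have h : (∫⁻ u : ((Fin (d + 2*n) → ℝ) × ℝ) × (Fin (d' + 2*n') → ℝ),
        ENNReal.ofReal (g ℓ u) ^ (1/(θ' * c' ℓ))) =
        ∫⁻ z, ∫⁻ y', ENNReal.ofReal (g ℓ (z, y')) ^ (1/(θ' * c' ℓ)) := by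
      rw [Measure.volume_eq_prod]
      exact lintegral_prod _ (((hg ℓ).ennreal_ofReal).pow_const _).aemeasurable
    rw [← h]
  -- Assembly
  calc (∫⁻ q : ((Fin (d + 2*n) → ℝ) × ℝ) × ((Fin (d' + 2*n') → ℝ) × ℝ),
        (∏ j, ENNReal.ofReal (f j (carnotProj d n α j q.1, q.2))) *
          ∏ ℓ, ENNReal.ofReal (g ℓ (q.1, carnotProj d' n' α' ℓ q.2)))
      = ∫⁻ w, ∫⁻ z, (∏ j, ENNReal.ofReal (f j (carnotProj d n α j z, w))) *
          ∏ ℓ, ENNReal.ofReal (g ℓ (z, carnotProj d' n' α' ℓ w)) := by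
        rw [Measure.volume_eq_prod]
        exact lintegral_prod_symm _ hPmeas.aemeasurable
    _ ≤ ∫⁻ w, ENNReal.ofReal (Real.exp D) ^ θ *
          ((M w) ^ θ' * ∏ j, (H j w) ^ (θ * c j)) := lintegral_mono stepB
    _ = ENNReal.ofReal (Real.exp D) ^ θ *
          ∫⁻ w, (M w) ^ θ' * ∏ j, (H j w) ^ (θ * c j) :=
        lintegral_const_mul'' _ hMHmeas.aemeasurable
    _ ≤ ENNReal.ofReal (Real.exp D) ^ θ *
          ((∫⁻ w, M w) ^ θ' * ∏ j, (∫⁻ w, H j w) ^ (θ * c j)) := mul_le_mul_right stepC _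
    _ ≤ ENNReal.ofReal (Real.exp D) ^ θ *
          ((ENNReal.ofReal (Real.exp D') * ∏ ℓ, (∫⁻ z, V ℓ z) ^ (c' ℓ)) ^ θ' *
            ∏ j, eLpNorm (f j) (ENNReal.ofReal (1/(θ * c j))) volume) := by
        refine mul_le_mul_right (mul_le_mul' (ENNReal.rpow_le_rpow stepE hθ'pos.le)
          (le_of_eq (Finset.prod_congr rfl fun j _ => stepD j))) _
    _ = ENNReal.ofReal (Real.exp (D * θ + D' * θ')) *
          ((∏ j, eLpNorm (f j) (ENNReal.ofReal (1/(θ * c j))) volume) *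
            ∏ ℓ, eLpNorm (g ℓ) (ENNReal.ofReal (1/(θ' * c' ℓ))) volume) := by
        have h5 : (ENNReal.ofReal (Real.exp D') * ∏ ℓ, (∫⁻ z, V ℓ z) ^ (c' ℓ)) ^ θ' =
            ENNReal.ofReal (Real.exp D') ^ θ' *
              ∏ ℓ, eLpNorm (g ℓ) (ENNReal.ofReal (1/(θ' * c' ℓ))) volume := by
          rw [ENNReal.mul_rpow_of_nonneg _ _ hθ'pos.le]
          congr 1
          rw [← ENNReal.prod_rpow_of_nonneg hθ'pos.le]
          refine Finset.prod_congr rfl fun ℓ _ => ?_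
          rw [← ENNReal.rpow_mul, mul_comm (c' ℓ) θ']
          exact stepF ℓ
        rw [h5]
        have hconst : ENNReal.ofReal (Real.exp D) ^ θ * ENNReal.ofReal (Real.exp D') ^ θ' =
            ENNReal.ofReal (Real.exp (D * θ + D' * θ')) := by
          rw [ENNReal.ofReal_rpow_of_nonneg (Real.exp_nonneg D) hθpos.le,
            ENNReal.ofReal_rpow_of_nonneg (Real.exp_nonneg D') hθ'pos.le,
            ← ENNReal.ofReal_mul (by positivity), ← Real.exp_mul, ← Real.exp_mul,
            ← Real.exp_add]
        rw [← hconst]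
        ring
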